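/- Let p > 1 and let u, v : Ω → ℝ be positive measurable functions with weak gradients ∇u, ∇v. For t ∈ (0,1) define σ_t = (t u^p + (1-t) v^p)^{1/p}. Then pointwise, |∇σ_t|^p ≤ t|∇u|^p + (1-t)|∇v|^p. -/

import Mathlib

open Real

theorem gradient_convexity_pointwise_estimate {N : ℕ} (p t u v : ℝ) (hp : 1 < p)
    (ht : t ∈ Set.Ioo (0:ℝ) 1) (hu : 0 < u) (hv : 0 < v)
    (gu gv : EuclideanSpace ℝ (Fin N)) :
    ‖((((t * u ^ p + (1 - t) * v ^ p) ^ (1/p)) ^ (1 - p)) •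
        ((t * u ^ (p - 1)) • gu + ((1 - t) * v ^ (p - 1)) • gv))‖ ^ p ≤
      t * ‖gu‖ ^ p + (1 - t) * ‖gv‖ ^ p := by
  obtain ⟨ht0, ht1⟩ := ht
  have ht1' : 0 < 1 - t := by linarith
  have hp0 : (0:ℝ) < p := by linarith
  set a := ‖gu‖ with ha
  set b := ‖gv‖ with hb
  have ha0 : 0 ≤ a := norm_nonneg _
  have hb0 : 0 ≤ b := norm_nonneg _
  have hup : (0:ℝ) < u ^ p := rpow_pos_of_pos hu p
  have hvp : (0:ℝ) < v ^ p := rpow_pos_of_pos hv p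
  set S : ℝ := t * u ^ p + (1 - t) * v ^ p with hS
  have hS0 : 0 < S := by positivity
  set σ : ℝ := S ^ (1/p) with hσ
  have hσ0 : 0 < σ := rpow_pos_of_pos hS0 _
  have hσp : σ ^ p = S := by
    rw [hσ, ← Real.rpow_mul hS0.le, one_div, inv_mul_cancel₀ hp0.ne', Real.rpow_one]
  -- Step 1: bound the norm via triangle inequality
  have hA : 0 < t * u ^ (p - 1) := by positivity
  have hB : 0 < (1 - t) * v ^ (p - 1) := by positivity
  have hσ1p : 0 < σ ^ (1 - p) := rpow_pos_of_pos hσ0 _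
  have step1 : ‖(σ ^ (1 - p)) • ((t * u ^ (p - 1)) • gu + ((1 - t) * v ^ (p - 1)) • gv)‖ ≤
      σ ^ (1 - p) * (t * u ^ (p - 1) * a + (1 - t) * v ^ (p - 1) * b) := by
    rw [norm_smul, Real.norm_eq_abs, abs_of_pos hσ1p]
    apply mul_le_mul_of_nonneg_left _ hσ1p.le
    calc ‖(t * u ^ (p - 1)) • gu + ((1 - t) * v ^ (p - 1)) • gv‖
        ≤ ‖(t * u ^ (p - 1)) • gu‖ + ‖((1 - t) * v ^ (p - 1)) • gv‖ := norm_add_le _ _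
      _ = t * u ^ (p - 1) * a + (1 - t) * v ^ (p - 1) * b := by
          rw [norm_smul, norm_smul, Real.norm_eq_abs, Real.norm_eq_abs,
            abs_of_pos hA, abs_of_pos hB]
  -- rewrite the inner quantity
  have hupow : u ^ (p - 1) * a = u ^ p * (a / u) := by
    rw [Real.rpow_sub hu, Real.rpow_one]
    field_simp
  have hvpow : v ^ (p - 1) * b = v ^ p * (b / v) := by
    rw [Real.rpow_sub hv, Real.rpow_one]
    field_simp
  set w : ℝ := t * u ^ p / S with hw
  have hw0 : 0 ≤ w := by positivity
  have hw1 : w + (1 - t) * v ^ p / S = 1 := by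
    rw [hw, ← add_div, ← hS, div_self hS0.ne']
  have hw1' : 1 - w = (1 - t) * v ^ p / S := by linarith
  have hw1nn : 0 ≤ 1 - w := by rw [hw1']; positivity
  set c : ℝ := a / u with hc
  set d : ℝ := b / v with hd
  have hc0 : 0 ≤ c := by positivity
  have hd0 : 0 ≤ d := by positivity
  -- convexity
  have hconv := (convexOn_rpow hp.le).2 (Set.mem_Ici.mpr hc0) (Set.mem_Ici.mpr hd0)
    hw0 hw1nn (by ring)
  simp only [smul_eq_mul] at hconv
  have hm0 : 0 ≤ w * c + (1 - w) * d := by positivity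
  -- key inequality
  have key : (σ ^ (1 - p) * (t * u ^ (p - 1) * a + (1 - t) * v ^ (p - 1) * b)) ^ p ≤
      t * a ^ p + (1 - t) * b ^ p := by
    have heq : σ ^ (1 - p) * (t * u ^ (p - 1) * a + (1 - t) * v ^ (p - 1) * b) =
        σ * (w * c + (1 - w) * d) := by
      have e1 : S * (w * c + (1 - w) * d) = t * (u ^ p * c) + (1 - t) * (v ^ p * d) := by
        rw [hw1', hw]
        field_simp
      have e0 : t * u ^ (p - 1) * a + (1 - t) * v ^ (p - 1) * b = S * (w * c + (1 - w) * d) := by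
        rw [e1, ← hupow, ← hvpow]; ring
      rw [e0, Real.rpow_sub hσ0, Real.rpow_one, hσp]
      field_simp
    rw [heq, Real.mul_rpow hσ0.le hm0, hσp]
    calc S * (w * c + (1 - w) * d) ^ p ≤ S * (w * c ^ p + (1 - w) * d ^ p) :=
          mul_le_mul_of_nonneg_left hconv hS0.le
      _ = t * a ^ p + (1 - t) * b ^ p := by
          have hca : u ^ p * c ^ p = a ^ p := by
            rw [← Real.mul_rpow hu.le hc0, hc, mul_div_cancel₀ _ hu.ne']
          have hdb : v ^ p * d ^ p = b ^ p := by
            rw [← Real.mul_rpow hv.le hd0, hd, mul_div_cancel₀ _ hv.ne']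
          rw [hw1', hw, ← hca, ← hdb]
          field_simp
  calc ‖(σ ^ (1 - p)) • ((t * u ^ (p - 1)) • gu + ((1 - t) * v ^ (p - 1)) • gv)‖ ^ p
      ≤ (σ ^ (1 - p) * (t * u ^ (p - 1) * a + (1 - t) * v ^ (p - 1) * b)) ^ p :=
        Real.rpow_le_rpow (norm_nonneg _) step1 hp0.le
    _ ≤ t * a ^ p + (1 - t) * b ^ p := key
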